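/- Let (i_1, …, i_k) be a composition of r into positive integers. Then ρ^{i_k} maps R_{i_1⋯i_k} bijectively onto R_{i_k i_1⋯i_{k−1}}; that is, ρ^{i_k} restricts to a ℚ-algebra isomorphism R_{i_1⋯i_k} ≅ R_{i_k i_1⋯i_{k−1}}. -/

import Mathlib

set_option linter.unusedSectionVars false

open MvPolynomial
open Fin.NatCast Fin.CommRing


lemma val_add_cast {r : ℕ} [NeZero r] (i : Fin r) (n : ℕ) (hn : n ≤ r) :
    (i + (n : Fin r)).val = if r ≤ i.val + n then i.val + n - r else i.val + n := by
  have hr : 0 < r := Nat.pos_of_ne_zero (NeZero.ne r)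
  have hi := i.isLt
  rw [Fin.val_add, Fin.val_natCast]
  rcases eq_or_lt_of_le hn with h | h
  · subst h
    rw [Nat.mod_self, Nat.add_zero, Nat.mod_eq_of_lt hi, if_pos (by omega)]
    omega
  · rw [Nat.mod_eq_of_lt h]
    by_cases hc : r ≤ i.val + n
    · rw [if_pos hc, Nat.mod_eq_sub_mod hc, Nat.mod_eq_of_lt (by omega)]
    · rw [if_neg hc, Nat.mod_eq_of_lt (by omega)]

lemma cast_add_cast_sub {r : ℕ} [NeZero r] (n : ℕ) (hn : n ≤ r) :
    ((n : Fin r)) + (((r - n : ℕ)) : Fin r) = 0 := by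
  rw [← Nat.cast_add]
  have : n + (r - n) = r := by omega
  rw [this, Fin.natCast_self]

lemma neg_one_val {k : ℕ} [NeZero k] : ((0 : Fin k) - 1).val = k - 1 := by
  have hk : 0 < k := Nat.pos_of_ne_zero (NeZero.ne k)
  rw [Fin.sub_def]
  simp only [Fin.val_zero, Fin.val_one']
  rcases eq_or_lt_of_le (Nat.succ_le_of_lt hk) with h | h
  · simp [← h]
  · rw [Nat.mod_eq_of_lt h, Nat.add_zero, Nat.mod_eq_of_lt (by omega)]

lemma sub_one_val {k : ℕ} [NeZero k] (j : Fin k) (hj : j ≠ 0) : (j - 1).val = j.val - 1 := by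
  have hj' : 0 < j.val := by
    rcases Nat.eq_zero_or_pos j.val with h | h
    · exact absurd (Fin.ext h) hj
    · exact h
  have hk2 : 2 ≤ k := by have := j.isLt; omega
  have hjk := j.isLt
  rw [Fin.sub_def]
  simp only [Fin.val_one']
  rw [Nat.mod_eq_of_lt hk2]
  rw [Nat.mod_eq_sub_mod (by omega), Nat.mod_eq_of_lt (by omega)]
  omega

section Sums
variable {k : ℕ} [NeZero k] (c : Fin k → ℕ)

lemma S_zero : ∑ l ∈ Finset.Iio (0 : Fin k), c l = 0 := by
  rw [Finset.sum_eq_zero_iff]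
  intro l hl
  simp only [Finset.mem_Iio] at hl
  exact absurd hl (by simp [Fin.lt_def])

lemma univ_eq_insert_last :
    insert ((0 : Fin k) - 1) (Finset.Iio ((0 : Fin k) - 1)) = (Finset.univ : Finset (Fin k)) := by
  ext l
  simp only [Finset.mem_insert, Finset.mem_Iio, Finset.mem_univ, iff_true]
  rcases eq_or_ne l ((0 : Fin k) - 1) with h | h
  · exact Or.inl h
  · refine Or.inr ?_
    rw [Fin.lt_def, neg_one_val]
    have h1 : l.val ≠ k - 1 := fun hv => h (Fin.ext (by rw [hv, neg_one_val]))
    have := l.isLt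
    omega

lemma last_not_mem_Iio (j : Fin k) : ((0 : Fin k) - 1) ∉ Finset.Iio j := by
  simp only [Finset.mem_Iio, Fin.lt_def, neg_one_val]
  have := j.isLt
  omega

lemma S_last_add {r : ℕ} (hsum : ∑ j, c j = r) :
    (∑ l ∈ Finset.Iio ((0 : Fin k) - 1), c l) + c ((0 : Fin k) - 1) = r := by
  rw [← hsum, ← univ_eq_insert_last, Finset.sum_insert (last_not_mem_Iio _)]
  ring

lemma blocks_le (j : Fin k) (hj : j ≠ (0 : Fin k) - 1) :
    (∑ l ∈ Finset.Iio j, c l) + c j ≤ ∑ l ∈ Finset.Iio ((0 : Fin k) - 1), c l := by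
  have hjv : j.val < k - 1 := by
    have h1 : j.val ≠ k - 1 := fun hv => hj (Fin.ext (by rw [hv, neg_one_val]))
    have := j.isLt
    omega
  have hsub : insert j (Finset.Iio j) ⊆ Finset.Iio ((0 : Fin k) - 1) := by
    intro l hl
    simp only [Finset.mem_insert, Finset.mem_Iio, Fin.lt_def, neg_one_val] at hl ⊢
    rcases hl with h | h
    · rw [h]; omega
    · omega
  calc (∑ l ∈ Finset.Iio j, c l) + c j
      = ∑ l ∈ insert j (Finset.Iio j), c l := by
        rw [Finset.sum_insert (by simp [Finset.mem_Iio])]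
        ring
    _ ≤ _ := Finset.sum_le_sum_of_subset hsub

lemma Iio_succ (j : Fin k) (hj : j ≠ (0 : Fin k) - 1) :
    Finset.Iio (j + 1) = insert j (Finset.Iio j) := by
  have hjv : j.val < k - 1 := by
    have h1 : j.val ≠ k - 1 := fun hv => hj (Fin.ext (by rw [hv, neg_one_val]))
    have := j.isLt
    omega
  have h1v : (j + 1).val = j.val + 1 := by
    have : (1 : Fin k) = ((1 : ℕ) : Fin k) := by norm_cast
    rw [this, val_add_cast j 1 (by omega), if_neg (by omega)]
  ext l
  simp only [Finset.mem_insert, Finset.mem_Iio, Fin.lt_def, h1v]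
  constructor
  · intro h
    rcases Nat.lt_or_ge l.val j.val with h' | h'
    · exact Or.inr h'
    · exact Or.inl (Fin.ext (by omega))
  · rintro (h | h)
    · rw [h]; omega
    · omega

lemma S_succ (j : Fin k) (hj : j ≠ (0 : Fin k) - 1) :
    ∑ l ∈ Finset.Iio (j + 1), c l = (∑ l ∈ Finset.Iio j, c l) + c j := by
  rw [Iio_succ j hj, Finset.sum_insert (by simp [Finset.mem_Iio])]
  ring

lemma covering {r : ℕ} (hsum : ∑ j, c j = r) (i : Fin r) :
    ∃ j : Fin k, (∑ l ∈ Finset.Iio j, c l) ≤ i.val ∧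
      i.val < (∑ l ∈ Finset.Iio j, c l) + c j := by
  classical
  set F := Finset.univ.filter (fun j : Fin k => (∑ l ∈ Finset.Iio j, c l) ≤ i.val) with hF
  have hne : F.Nonempty := ⟨0, by simp [hF, S_zero c]⟩
  set j := F.max' hne with hjdef
  have hjF : j ∈ F := F.max'_mem hne
  have hjle : (∑ l ∈ Finset.Iio j, c l) ≤ i.val := by
    simpa [hF] using hjF
  refine ⟨j, hjle, ?_⟩
  by_contra hcon
  push_neg at hcon
  rcases eq_or_ne j ((0 : Fin k) - 1) with hj | hj
  · have := S_last_add c hsum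
    rw [hj] at hcon
    have := i.isLt
    omega
  · have hmem : j + 1 ∈ F := by
      simp only [hF, Finset.mem_filter, Finset.mem_univ, true_and]
      rw [S_succ c j hj]
      exact hcon
    have hle := F.le_max' _ hmem
    rw [← hjdef] at hle
    have h1v : (j + 1).val = j.val + 1 := by
      have hjv : j.val < k - 1 := by
        have h1 : j.val ≠ k - 1 := fun hv => hj (Fin.ext (by rw [hv, neg_one_val]))
        have := j.isLt
        omega
      have : (1 : Fin k) = ((1 : ℕ) : Fin k) := by norm_cast
      rw [this, val_add_cast j 1 (by omega), if_neg (by omega)]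
    rw [Fin.le_def, h1v] at hle
    omega

lemma rot_sum (j : Fin k) (hj : j ≠ 0) :
    ∑ l ∈ Finset.Iio j, c (l - 1)
      = c ((0 : Fin k) - 1) + ∑ l ∈ Finset.Iio (j - 1), c l := by
  have himg : (Finset.Iio j).image (· - (1 : Fin k))
      = insert ((0 : Fin k) - 1) (Finset.Iio (j - 1)) := by
    ext l
    simp only [Finset.mem_image, Finset.mem_insert, Finset.mem_Iio]
    constructor
    · rintro ⟨t, ht, rfl⟩
      rcases eq_or_ne t 0 with h0 | h0
      · exact Or.inl (by rw [h0])
      · refine Or.inr ?_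
        rw [Fin.lt_def, sub_one_val t h0, sub_one_val j hj]
        rw [Fin.lt_def] at ht
        have ht0 : 0 < t.val := by
          rcases Nat.eq_zero_or_pos t.val with h | h
          · exact absurd (Fin.ext h) h0
          · exact h
        omega
    · rintro (h | h)
      · refine ⟨0, ?_, by rw [h]⟩
        rw [Fin.lt_def, Fin.val_zero]
        rcases Nat.eq_zero_or_pos j.val with h' | h'
        · exact absurd (Fin.ext h') hj
        · exact h'
      · refine ⟨l + 1, ?_, by rw [add_sub_cancel_right]⟩
        rw [Fin.lt_def] at h ⊢
        rw [sub_one_val j hj] at h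
        have hlk : l.val < k - 1 := by
          have := (j - 1).isLt
          omega
        have h1v : (l + 1).val = l.val + 1 := by
          have : (1 : Fin k) = ((1 : ℕ) : Fin k) := by norm_cast
          rw [this, val_add_cast l 1 (by have := l.isLt; omega), if_neg (by have := l.isLt; omega)]
        rw [h1v]
        omega
  have hinj : ∀ x ∈ Finset.Iio j, ∀ y ∈ Finset.Iio j,
      x - (1 : Fin k) = y - (1 : Fin k) → x = y := by
    intro x _ y _ h
    have := congrArg (· + (1 : Fin k)) h
    simpa [sub_add_cancel] using this
  calc ∑ l ∈ Finset.Iio j, c (l - 1)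
      = ∑ l ∈ (Finset.Iio j).image (· - (1 : Fin k)), c l := (Finset.sum_image hinj).symm
    _ = c ((0 : Fin k) - 1) + ∑ l ∈ Finset.Iio (j - 1), c l := by
        rw [himg, Finset.sum_insert (last_not_mem_Iio _)]
end Sums

def YC (r k : ℕ) (c : Fin k → ℕ) (τ : Equiv.Perm (Fin r)) : Prop :=
  ∀ (j : Fin k) (m : Fin r),
    ((∑ l ∈ Finset.Iio j, c l) ≤ m.val ∧ m.val < (∑ l ∈ Finset.Iio j, c l) + c j) →
    ((∑ l ∈ Finset.Iio j, c l) ≤ (τ m).val ∧ (τ m).val < (∑ l ∈ Finset.Iio j, c l) + c j)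

section Comb
variable {r k : ℕ} [NeZero r] [NeZero k] (c : Fin k → ℕ)

lemma M_le_r (hsum : ∑ j, c j = r) : c ((0 : Fin k) - 1) ≤ r := by
  rw [← hsum]
  exact Finset.single_le_sum (f := c) (fun l _ => Nat.zero_le _) (Finset.mem_univ _)


lemma young_wrap (hsum : ∑ j, c j = r) (τ : Equiv.Perm (Fin r)) (h : YC r k c τ)
    (i : Fin r) :
    r ≤ i.val + c ((0 : Fin k) - 1) ↔ r ≤ (τ i).val + c ((0 : Fin k) - 1) := by
  have hlast := S_last_add c hsum
  constructor
  · intro hi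
    have := (h ((0 : Fin k) - 1) i ⟨by omega, by omega⟩).1
    omega
  · intro hi
    by_contra hcon
    push_neg at hcon
    obtain ⟨j, hj1, hj2⟩ := covering c hsum i
    have hjne : j ≠ (0 : Fin k) - 1 := by
      rintro rfl
      omega
    have hble := blocks_le c j hjne
    have := (h j i ⟨hj1, hj2⟩).2
    omega


lemma conj_one (hsum : ∑ j, c j = r) (τ' : Equiv.Perm (Fin r))
    (h' : YC r k (fun j => c (j - 1)) τ') :
    YC r k c ((Equiv.addRight ((c ((0 : Fin k) - 1) : ℕ) : Fin r)).trans
      (τ'.trans (Equiv.addRight (((r - c ((0 : Fin k) - 1) : ℕ)) : Fin r)))) := by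
  have hMr : c ((0 : Fin k) - 1) ≤ r := M_le_r c hsum
  have hlast := S_last_add c hsum
  intro j i hi
  simp only [Equiv.trans_apply, Equiv.coe_addRight]
  set x := τ' (i + ((c ((0 : Fin k) - 1) : ℕ) : Fin r)) with hx
  rcases eq_or_ne j ((0 : Fin k) - 1) with hj | hj
  · subst hj
    have hiv : i.val < r := i.isLt
    have hadd : (i + ((c ((0 : Fin k) - 1) : ℕ) : Fin r)).val
        = i.val + c ((0 : Fin k) - 1) - r := by
      rw [val_add_cast i _ hMr, if_pos (by omega)]
    have hmem : (∑ l ∈ Finset.Iio (0 : Fin k), c (l - 1))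
        ≤ (i + ((c ((0 : Fin k) - 1) : ℕ) : Fin r)).val ∧
        (i + ((c ((0 : Fin k) - 1) : ℕ) : Fin r)).val
          < (∑ l ∈ Finset.Iio (0 : Fin k), c (l - 1)) + c ((0 : Fin k) - 1) := by
      rw [S_zero]
      exact ⟨Nat.zero_le _, by omega⟩
    have hx' : (∑ l ∈ Finset.Iio (0 : Fin k), c (l - 1)) ≤ x.val ∧
        x.val < (∑ l ∈ Finset.Iio (0 : Fin k), c (l - 1)) + c ((0 : Fin k) - 1) :=
      h' 0 _ hmem
    rw [S_zero] at hx'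
    have hfin : (x + (((r - c ((0 : Fin k) - 1) : ℕ)) : Fin r)).val
        = x.val + (r - c ((0 : Fin k) - 1)) := by
      rw [val_add_cast x _ (by omega), if_neg (by omega)]
    rw [hfin]
    omega
  · have hble := blocks_le c j hj
    have hiv : i.val < r := i.isLt
    have hadd : (i + ((c ((0 : Fin k) - 1) : ℕ) : Fin r)).val
        = i.val + c ((0 : Fin k) - 1) := by
      rw [val_add_cast i _ hMr, if_neg (by omega)]
    have hj1 : j + 1 ≠ 0 := by
      intro h0
      apply hj
      rw [← h0]
      ring
    have hS' : ∑ l ∈ Finset.Iio (j + 1), c (l - 1)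
        = c ((0 : Fin k) - 1) + ∑ l ∈ Finset.Iio j, c l := by
      rw [rot_sum c (j + 1) hj1, add_sub_cancel_right]
    have hc' : c (j + 1 - 1) = c j := by rw [add_sub_cancel_right]
    have hmem : (∑ l ∈ Finset.Iio (j + 1), c (l - 1))
        ≤ (i + ((c ((0 : Fin k) - 1) : ℕ) : Fin r)).val ∧
        (i + ((c ((0 : Fin k) - 1) : ℕ) : Fin r)).val
          < (∑ l ∈ Finset.Iio (j + 1), c (l - 1)) + c (j + 1 - 1) := by
      rw [hS', hc', hadd]
      omega
    have hx' : (∑ l ∈ Finset.Iio (j + 1), c (l - 1)) ≤ x.val ∧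
        x.val < (∑ l ∈ Finset.Iio (j + 1), c (l - 1)) + c (j + 1 - 1) :=
      h' (j + 1) _ hmem
    rw [hS', hc'] at hx'
    have hfin : (x + (((r - c ((0 : Fin k) - 1) : ℕ)) : Fin r)).val
        = x.val - c ((0 : Fin k) - 1) := by
      rw [val_add_cast x _ (by omega), if_pos (by omega)]
      omega
    rw [hfin]
    omega

lemma conj_two (hsum : ∑ j, c j = r) (τ : Equiv.Perm (Fin r))
    (h : YC r k c τ) :
    YC r k (fun j => c (j - 1))
      ((Equiv.addRight (((r - c ((0 : Fin k) - 1) : ℕ)) : Fin r)).trans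
      (τ.trans (Equiv.addRight ((c ((0 : Fin k) - 1) : ℕ) : Fin r)))) := by
  have hMr : c ((0 : Fin k) - 1) ≤ r := M_le_r c hsum
  have hlast := S_last_add c hsum
  intro j i hi
  simp only [Equiv.trans_apply, Equiv.coe_addRight]
  set x := τ (i + (((r - c ((0 : Fin k) - 1) : ℕ)) : Fin r)) with hx
  replace hi : (∑ l ∈ Finset.Iio j, c (l - 1)) ≤ i.val ∧
      i.val < (∑ l ∈ Finset.Iio j, c (l - 1)) + c (j - 1) := hi
  show (∑ l ∈ Finset.Iio j, c (l - 1)) ≤ _ ∧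
      _ < (∑ l ∈ Finset.Iio j, c (l - 1)) + c (j - 1)
  rcases eq_or_ne j 0 with hj | hj
  · subst hj
    rw [S_zero] at hi ⊢
    have hi2 : i.val < c ((0 : Fin k) - 1) := by
      have := hi.2
      omega
    have hadd : (i + (((r - c ((0 : Fin k) - 1) : ℕ)) : Fin r)).val
        = i.val + (r - c ((0 : Fin k) - 1)) := by
      rw [val_add_cast i _ (by omega), if_neg (by omega)]
    have hmem : (∑ l ∈ Finset.Iio ((0 : Fin k) - 1), c l)
        ≤ (i + (((r - c ((0 : Fin k) - 1) : ℕ)) : Fin r)).val ∧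
        (i + (((r - c ((0 : Fin k) - 1) : ℕ)) : Fin r)).val
          < (∑ l ∈ Finset.Iio ((0 : Fin k) - 1), c l) + c ((0 : Fin k) - 1) := by
      rw [hadd]
      constructor <;> omega
    have hx' := h ((0 : Fin k) - 1) _ hmem
    rw [← hx] at hx'
    have hfin : (x + ((c ((0 : Fin k) - 1) : ℕ) : Fin r)).val
        = x.val + c ((0 : Fin k) - 1) - r := by
      rw [val_add_cast x _ hMr, if_pos (by omega)]
    rw [hfin]
    omega
  · have hjj : (j - 1) + 1 = j := by ring
    have hj'ne : j - 1 ≠ (0 : Fin k) - 1 := by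
      intro h0
      apply hj
      rw [← hjj, h0]
      ring
    have hble := blocks_le c (j - 1) hj'ne
    have hS' : ∑ l ∈ Finset.Iio j, c (l - 1)
        = c ((0 : Fin k) - 1) + ∑ l ∈ Finset.Iio (j - 1), c l :=
      rot_sum c j hj
    rw [hS'] at hi ⊢
    have hiv : c ((0 : Fin k) - 1) ≤ i.val ∧ i.val < r := ⟨by omega, i.isLt⟩
    have hadd : (i + (((r - c ((0 : Fin k) - 1) : ℕ)) : Fin r)).val
        = i.val - c ((0 : Fin k) - 1) := by
      rw [val_add_cast i _ (by omega), if_pos (by omega)]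
      omega
    have hmem : (∑ l ∈ Finset.Iio (j - 1), c l)
        ≤ (i + (((r - c ((0 : Fin k) - 1) : ℕ)) : Fin r)).val ∧
        (i + (((r - c ((0 : Fin k) - 1) : ℕ)) : Fin r)).val
          < (∑ l ∈ Finset.Iio (j - 1), c l) + c (j - 1) := by
      rw [hadd]
      constructor <;> omega
    have hx' := h (j - 1) _ hmem
    rw [← hx] at hx'
    have hfin : (x + ((c ((0 : Fin k) - 1) : ℕ) : Fin r)).val
        = x.val + c ((0 : Fin k) - 1) := by
      rw [val_add_cast x _ hMr, if_neg (by omega)]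
    rw [hfin]
    constructor <;> omega
end Comb
section Rho
variable {r : ℕ} [NeZero r] (ρ : MvPolynomial (Option (Fin r)) ℚ ≃ₐ[ℚ] MvPolynomial (Option (Fin r)) ℚ)

lemma rho_pow_none (hρy : ρ (X none) = X none) (m : ℕ) : (ρ ^ m) (X none) = X none := by
  induction m with
  | zero => rw [pow_zero]; rfl
  | succ n ih => rw [pow_succ, AlgEquiv.mul_apply, hρy, ih]

lemma rho_pow_some (hρy : ρ (X none) = X none)
    (hρx : ∀ i : Fin r, ρ (X (some i)) = X (some (i + 1)) - (if i + 1 = 0 then X none else 0))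
    (m : ℕ) (hm : m ≤ r) (i : Fin r) :
    (ρ ^ m) (X (some i)) =
      X (some (i + (m : Fin r))) - (if r ≤ i.val + m then X none else 0) := by
  have hr : 0 < r := Nat.pos_of_ne_zero (NeZero.ne r)
  induction m generalizing i with
  | zero =>
    have hi := i.isLt
    rw [pow_zero, if_neg (by omega)]
    simp
  | succ n ih =>
    have hi := i.isLt
    have hn : n ≤ r := by omega
    rw [pow_succ, AlgEquiv.mul_apply, hρx i, map_sub, apply_ite ⇑(ρ ^ n), map_zero,
      rho_pow_none ρ hρy, ih (by omega) (i + 1)]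
    have hone : (1 : Fin r) = ((1 : ℕ) : Fin r) := by norm_cast
    have h1v : (i + 1).val = if r ≤ i.val + 1 then i.val + 1 - r else i.val + 1 := by
      rw [hone, val_add_cast i 1 (by omega)]
    have hz : (i + 1 = 0) ↔ (i.val + 1 = r) := by
      rw [Fin.ext_iff, Fin.val_zero, h1v]
      split <;> omega
    have hcast : i + 1 + (n : Fin r) = i + ((n + 1 : ℕ) : Fin r) := by
      push_cast
      ring
    rw [hcast]
    by_cases hc : i.val + 1 = r
    · -- wrap at the first step
      have h0 : (i + 1).val = 0 := by rw [h1v, if_pos (by omega)]; omega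
      rw [if_pos (hz.mpr hc), h0, if_neg (show ¬ r ≤ 0 + n by omega), sub_zero,
        if_pos (by omega)]
    · have h1v' : (i + 1).val = i.val + 1 := by rw [h1v, if_neg (by omega)]
      rw [if_neg (fun h => hc (hz.mp h)), sub_zero, h1v']
      simp only [show (i : ℕ) + 1 + n = (i : ℕ) + (n + 1) from by omega]

lemma rho_pow_comm (hρy : ρ (X none) = X none)
    (hρx : ∀ i : Fin r, ρ (X (some i)) = X (some (i + 1)) - (if i + 1 = 0 then X none else 0))
    (m : ℕ) (hm : m ≤ r) (τ τ' : Equiv.Perm (Fin r))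
    (hwrap : ∀ i : Fin r, r ≤ i.val + m ↔ r ≤ (τ i).val + m)
    (hconj : ∀ i : Fin r, τ' (i + (m : Fin r)) = τ i + (m : Fin r))
    (p : MvPolynomial (Option (Fin r)) ℚ) :
    (ρ ^ m) (rename (Option.map ⇑τ) p) = rename (Option.map ⇑τ') ((ρ ^ m) p) := by
  have key : ((ρ ^ m).toAlgHom.comp (rename (Option.map ⇑τ)))
      = (rename (Option.map ⇑τ')).comp (ρ ^ m).toAlgHom := by
    apply algHom_ext
    rintro (_ | i)
    · simp only [AlgHom.comp_apply, rename_X, Option.map_none, AlgEquiv.toAlgHom_eq_coe,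
        AlgHom.coe_coe, AlgEquiv.toAlgHom_apply, rho_pow_none ρ hρy]
    · simp only [AlgHom.comp_apply, rename_X, Option.map_some, AlgEquiv.toAlgHom_eq_coe,
        AlgHom.coe_coe, AlgEquiv.toAlgHom_apply]
      rw [rho_pow_some ρ hρy hρx m hm, rho_pow_some ρ hρy hρx m hm, map_sub,
        apply_ite ⇑(rename (Option.map ⇑τ')), map_zero, rename_X, rename_X,
        Option.map_some, Option.map_none, hconj i]
      congr 1
      exact if_congr ((hwrap i).symm) rfl rfl
  calc (ρ ^ m) (rename (Option.map ⇑τ) p)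
      = ((ρ ^ m).toAlgHom.comp (rename (Option.map ⇑τ))) p := rfl
    _ = ((rename (Option.map ⇑τ')).comp (ρ ^ m).toAlgHom) p := by rw [key]
    _ = rename (Option.map ⇑τ') ((ρ ^ m) p) := rfl

end Rho

/-- The fixed subalgebra `R_{i_1⋯i_k}` (as a subset of R = ℚ[y, x_1, …, x_r]) of the Young
subgroup S_{i_1} × ⋯ × S_{i_k} ≤ S_r attached to the composition c = (i_1, …, i_k) of r:
the polynomials fixed by every permutation τ of the x-variables preserving each consecutive
block.  Variables indexed by `Option (Fin r)`: `none` is `y`, `some m` is `x_{m+1}`. -/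
def youngFixed (r k : ℕ) (c : Fin k → ℕ) : Set (MvPolynomial (Option (Fin r)) ℚ) :=
  {p | ∀ τ : Equiv.Perm (Fin r),
    (∀ (j : Fin k) (m : Fin r),
      ((∑ l ∈ Finset.Iio j, c l) ≤ m.val ∧ m.val < (∑ l ∈ Finset.Iio j, c l) + c j) →
      ((∑ l ∈ Finset.Iio j, c l) ≤ (τ m).val ∧ (τ m).val < (∑ l ∈ Finset.Iio j, c l) + c j)) →
    rename (Option.map ⇑τ) p = p}

/-- for a composition (i_1, …, i_k) of r, the automorphism ρ^{i_k} maps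
R_{i_1⋯i_k} bijectively onto R_{i_k i_1⋯i_{k−1}} (hence restricts to a ℚ-algebra
isomorphism, ρ being a ℚ-algebra automorphism).
Here `c ((0 : Fin k) - 1) = c (k−1) = i_k`, and `fun j => c (j - 1)` is the rotated
composition (i_k, i_1, …, i_{k−1}); `ρ ^ m` is composition of automorphisms. -/
theorem stmt_8 (r : ℕ) (hr : 3 ≤ r) [NeZero r]
    (ρ : MvPolynomial (Option (Fin r)) ℚ ≃ₐ[ℚ] MvPolynomial (Option (Fin r)) ℚ)
    (hρy : ρ (X none) = X none)
    (hρx : ∀ i : Fin r, ρ (X (some i)) =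
      X (some (i + 1)) - (if i + 1 = 0 then X none else 0))
    (k : ℕ) [NeZero k] (c : Fin k → ℕ) (hpos : ∀ j, 0 < c j) (hsum : ∑ j, c j = r) :
    Set.BijOn ⇑(ρ ^ c ((0 : Fin k) - 1)) (youngFixed r k c)
      (youngFixed r k (fun j => c (j - 1))) := by
  classical
  have hMr : c ((0 : Fin k) - 1) ≤ r := M_le_r c hsum
  have hμν : ((c ((0 : Fin k) - 1) : ℕ) : Fin r)
      + (((r - c ((0 : Fin k) - 1) : ℕ)) : Fin r) = 0 :=
    cast_add_cast_sub _ hMr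
  have hνμ : (((r - c ((0 : Fin k) - 1) : ℕ)) : Fin r)
      + ((c ((0 : Fin k) - 1) : ℕ) : Fin r) = 0 := by
    rw [add_comm]
    exact hμν
  refine ⟨?_, (AlgEquiv.injective _).injOn, ?_⟩
  · intro p hp τ' hτ'
    have hτ'YC : YC r k (fun j => c (j - 1)) τ' := hτ'
    set τ : Equiv.Perm (Fin r) :=
      (Equiv.addRight ((c ((0 : Fin k) - 1) : ℕ) : Fin r)).trans
        (τ'.trans (Equiv.addRight (((r - c ((0 : Fin k) - 1) : ℕ)) : Fin r))) with hτdef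
    have hYC : YC r k c τ := conj_one c hsum τ' hτ'YC
    have hwrap : ∀ i : Fin r, r ≤ i.val + c ((0 : Fin k) - 1)
        ↔ r ≤ (τ i).val + c ((0 : Fin k) - 1) :=
      young_wrap c hsum τ hYC
    have hτapp : ∀ y : Fin r, τ y
        = τ' (y + ((c ((0 : Fin k) - 1) : ℕ) : Fin r))
          + (((r - c ((0 : Fin k) - 1) : ℕ)) : Fin r) := fun y => rfl
    have hconj : ∀ i : Fin r, τ' (i + ((c ((0 : Fin k) - 1) : ℕ) : Fin r))
        = τ i + ((c ((0 : Fin k) - 1) : ℕ) : Fin r) := by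
      intro i
      rw [hτapp i, add_assoc, hνμ, add_zero]
    rw [← rho_pow_comm ρ hρy hρx _ hMr τ τ' hwrap hconj p, hp τ hYC]
  · intro q hq
    refine ⟨(ρ ^ c ((0 : Fin k) - 1)).symm q, ?_, AlgEquiv.apply_symm_apply _ q⟩
    intro τ hτ
    have hYC : YC r k c τ := hτ
    set τ' : Equiv.Perm (Fin r) :=
      (Equiv.addRight (((r - c ((0 : Fin k) - 1) : ℕ)) : Fin r)).trans
        (τ.trans (Equiv.addRight ((c ((0 : Fin k) - 1) : ℕ) : Fin r))) with hτ'def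
    have hYC' : YC r k (fun j => c (j - 1)) τ' := conj_two c hsum τ hYC
    have hwrap : ∀ i : Fin r, r ≤ i.val + c ((0 : Fin k) - 1)
        ↔ r ≤ (τ i).val + c ((0 : Fin k) - 1) :=
      young_wrap c hsum τ hYC
    have hτ'app : ∀ y : Fin r, τ' y
        = τ (y + (((r - c ((0 : Fin k) - 1) : ℕ)) : Fin r))
          + ((c ((0 : Fin k) - 1) : ℕ) : Fin r) := fun y => rfl
    have hconj : ∀ i : Fin r, τ' (i + ((c ((0 : Fin k) - 1) : ℕ) : Fin r))
        = τ i + ((c ((0 : Fin k) - 1) : ℕ) : Fin r) := by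
      intro i
      rw [hτ'app, add_assoc, hμν, add_zero]
    apply (ρ ^ c ((0 : Fin k) - 1)).injective
    rw [rho_pow_comm ρ hρy hρx _ hMr τ τ' hwrap hconj, AlgEquiv.apply_symm_apply]
    exact hq τ' hYC'
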